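/- Let α ≥ 4 and let G be the tree obtained from the path v_1 v_2 … v_α by attaching exactly two leaves ℓ_i and ℓ'_i to v_i for each i ∈ {1, …, α}. Then dim_1(G) ≥ 2α − 1. -/

import Mathlib

/-- The `k`-truncated distance: `d_k(x,y) = min{d(x,y), k+1}`. -/
noncomputable def SimpleGraph.distK {V : Type*} (G : SimpleGraph V) (k : ℕ) (x y : V) : ℕ :=
  min (G.dist x y) (k + 1)

/-- `S` is a distance-`k` resolving set of `G`: every pair of distinct vertices is
resolved by some vertex of `S` with respect to the `k`-truncated distance. -/
def SimpleGraph.IsDistKResolvingSet {V : Type*} (G : SimpleGraph V) (k : ℕ) (S : Set V) : Prop :=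
  ∀ x y : V, x ≠ y → ∃ z ∈ S, G.distK k x z ≠ G.distK k y z

/-- The distance-`k` metric dimension of `G`. -/
noncomputable def SimpleGraph.distKDim {V : Type*} (G : SimpleGraph V) (k : ℕ) : ℕ :=
  sInf {m : ℕ | ∃ S : Set V, S.ncard = m ∧ G.IsDistKResolvingSet k S}

/-- `S` is a resolving set of `G`. -/
def SimpleGraph.IsResolvingSet {V : Type*} (G : SimpleGraph V) (S : Set V) : Prop :=
  ∀ x y : V, x ≠ y → ∃ z ∈ S, G.dist x z ≠ G.dist y z

/-- The metric dimension of `G`. -/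
noncomputable def SimpleGraph.metricDim {V : Type*} (G : SimpleGraph V) : ℕ :=
  sInf {m : ℕ | ∃ S : Set V, S.ncard = m ∧ G.IsResolvingSet S}

/-- Vertices of the caterpillar tree obtained from the path `v_1 v_2 … v_α` by attaching
two leaves `ℓ_i, ℓ'_i` to each `v_i` (`v_{i+1} = v i`, `ℓ_{i+1} = leaf i`,
`ℓ'_{i+1} = leaf' i` for `i : Fin α`). -/
inductive CatV (α : ℕ) : Type where
  | v : Fin α → CatV α
  | leaf : Fin α → CatV α
  | leaf' : Fin α → CatV α

/-- Edges: `v_i v_{i+1}`, `v_i ℓ_i`, `v_i ℓ'_i`. -/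
def catAdj (α : ℕ) : CatV α → CatV α → Prop
  | .v i, .v j => j.val = i.val + 1
  | .v i, .leaf j => i = j
  | .v i, .leaf' j => i = j
  | _, _ => False

def catG (α : ℕ) : SimpleGraph (CatV α) := SimpleGraph.fromRel (catAdj α)


namespace CatAux
open SimpleGraph
variable {α : ℕ}

deriving instance DecidableEq for CatV

def catEquiv (α : ℕ) : CatV α ≃ (Fin α ⊕ Fin α ⊕ Fin α) where
  toFun x := match x with
    | .v i => .inl i | .leaf i => .inr (.inl i) | .leaf' i => .inr (.inr i)
  invFun x := match x with
    | .inl i => .v i | .inr (.inl i) => .leaf i | .inr (.inr i) => .leaf' i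
  left_inv x := by cases x <;> rfl
  right_inv x := by rcases x with i | i | i <;> rfl

instance : Fintype (CatV α) := Fintype.ofEquiv _ (catEquiv α).symm

def idx : CatV α → Fin α
  | .v i => i | .leaf i => i | .leaf' i => i

lemma adj_leaf_iff (i : Fin α) (z : CatV α) :
    (catG α).Adj (CatV.leaf i) z ↔ z = CatV.v i := by
  cases z <;> simp [catG, SimpleGraph.fromRel_adj, catAdj, eq_comm]

lemma adj_leaf'_iff (i : Fin α) (z : CatV α) :
    (catG α).Adj (CatV.leaf' i) z ↔ z = CatV.v i := by
  cases z <;> simp [catG, SimpleGraph.fromRel_adj, catAdj, eq_comm]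

lemma reach_v_zero (hα : 0 < α) : ∀ n (hn : n < α),
    (catG α).Reachable (CatV.v ⟨n, hn⟩) (CatV.v ⟨0, hα⟩)
  | 0, _ => SimpleGraph.Reachable.refl _
  | n+1, hn => by
      have hm : n < α := Nat.lt_of_succ_lt hn
      have hadj : (catG α).Adj (CatV.v ⟨n+1, hn⟩) (CatV.v ⟨n, hm⟩) := by
        simp [catG, SimpleGraph.fromRel_adj, catAdj]
      exact hadj.reachable.trans (reach_v_zero hα n hm)

lemma reach (hα : 0 < α) (x : CatV α) : (catG α).Reachable x (CatV.v ⟨0, hα⟩) := by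
  cases x with
  | v i => simpa using reach_v_zero hα i.val i.isLt
  | leaf i =>
      exact (((adj_leaf_iff i (CatV.v i)).mpr rfl).reachable).trans
        (by simpa using reach_v_zero hα i.val i.isLt)
  | leaf' i =>
      exact (((adj_leaf'_iff i (CatV.v i)).mpr rfl).reachable).trans
        (by simpa using reach_v_zero hα i.val i.isLt)

lemma connected (hα : 0 < α) : (catG α).Connected := by
  haveI : Nonempty (CatV α) := ⟨CatV.v ⟨0, hα⟩⟩
  exact ⟨fun x y => (reach hα x).trans (reach hα y).symm⟩

lemma distK_eq_two {V : Type*} {G : SimpleGraph V} (hc : G.Connected) {x z : V}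
    (hne : x ≠ z) (hadj : ¬ G.Adj x z) : G.distK 1 x z = 2 := by
  have h1 : 0 < G.dist x z := hc.pos_dist_of_ne hne
  have h2 : G.dist x z ≠ 1 := fun h => hadj (SimpleGraph.dist_eq_one_iff_adj.mp h)
  simp only [SimpleGraph.distK]; omega

lemma distK_adj {V : Type*} {G : SimpleGraph V} {x z : V} (h : G.Adj x z) :
    G.distK 1 x z = 1 := by
  have := SimpleGraph.dist_eq_one_iff_adj.mpr h
  simp only [SimpleGraph.distK]; omega

end CatAux

/-- for the caterpillar obtained from the path `v_1 … v_α` (`α ≥ 4`) by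
attaching two leaves to each `v_i`, `dim_1(G) ≥ 2α - 1`. -/
theorem stmt_14 (α : ℕ) (hα : 4 ≤ α) : 2 * α - 1 ≤ (catG α).distKDim 1 := by
  classical
  have hα0 : 0 < α := by omega
  have hc : (catG α).Connected := CatAux.connected hα0
  refine le_csInf ⟨(Set.univ : Set (CatV α)).ncard, Set.univ, rfl, ?_⟩ ?_
  · -- univ is resolving
    intro x y hxy
    refine ⟨x, trivial, ?_⟩
    have h0 : (catG α).distK 1 x x = 0 := by simp [SimpleGraph.distK]
    have h1 : 0 < (catG α).dist y x := hc.pos_dist_of_ne (Ne.symm hxy)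
    simp only [SimpleGraph.distK] at *
    omega
  · rintro m ⟨S, rfl, hS⟩
    -- Fact A: each twin pair contributes a leaf to S
    have hA : ∀ i : Fin α, CatV.leaf i ∈ S ∨ CatV.leaf' i ∈ S := by
      intro i
      by_contra h
      push_neg at h
      obtain ⟨z, hzS, hz⟩ := hS (CatV.leaf i) (CatV.leaf' i) (by simp)
      apply hz
      by_cases hv : z = CatV.v i
      · subst hv
        rw [CatAux.distK_adj ((CatAux.adj_leaf_iff i _).mpr rfl),
            CatAux.distK_adj ((CatAux.adj_leaf'_iff i _).mpr rfl)]
      · have ha1 : ¬ (catG α).Adj (CatV.leaf i) z :=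
          fun ha => hv ((CatAux.adj_leaf_iff i z).mp ha)
        have ha2 : ¬ (catG α).Adj (CatV.leaf' i) z :=
          fun ha => hv ((CatAux.adj_leaf'_iff i z).mp ha)
        have hn1 : CatV.leaf i ≠ z := fun e => h.1 (e ▸ hzS)
        have hn2 : CatV.leaf' i ≠ z := fun e => h.2 (e ▸ hzS)
        rw [CatAux.distK_eq_two hc hn1 ha1, CatAux.distK_eq_two hc hn2 ha2]
    set P : Fin α → Prop :=
      fun i => CatV.v i ∉ S ∧ (CatV.leaf i ∉ S ∨ CatV.leaf' i ∉ S) with hP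
    have pick : ∀ i : Fin α, (CatV.leaf i ∉ S ∨ CatV.leaf' i ∉ S) →
        ∃ x, x ∉ S ∧ CatAux.idx x = i ∧ ∀ z, ((catG α).Adj x z ↔ z = CatV.v i) := by
      rintro i (h | h)
      · exact ⟨CatV.leaf i, h, rfl, fun z => CatAux.adj_leaf_iff i z⟩
      · exact ⟨CatV.leaf' i, h, rfl, fun z => CatAux.adj_leaf'_iff i z⟩
    -- Fact B: at most one bad column
    have hB : ∀ i j : Fin α, P i → P j → i = j := by
      rintro i j ⟨hvi, hi⟩ ⟨hvj, hj⟩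
      by_contra hij
      obtain ⟨x, hxS, hxi, hxa⟩ := pick i hi
      obtain ⟨y, hyS, hyj, hya⟩ := pick j hj
      have hxy : x ≠ y := fun e => hij (by rw [← hxi, ← hyj, e])
      obtain ⟨z, hzS, hz⟩ := hS x y hxy
      apply hz
      have hnx : x ≠ z := fun e => hxS (e ▸ hzS)
      have hny : y ≠ z := fun e => hyS (e ▸ hzS)
      have hax : ¬ (catG α).Adj x z := fun ha => hvi ((hxa z).mp ha ▸ hzS)
      have hay : ¬ (catG α).Adj y z := fun ha => hvj ((hya z).mp ha ▸ hzS)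
      rw [CatAux.distK_eq_two hc hnx hax, CatAux.distK_eq_two hc hny hay]
    -- counting
    have hfin : S.Finite := Set.toFinite S
    set F : Finset (CatV α) := hfin.toFinset with hF
    have hcard : S.ncard = F.card := Set.ncard_eq_toFinset_card S hfin
    have hmemF : ∀ x, x ∈ F ↔ x ∈ S := fun x => hfin.mem_toFinset
    have hsum : F.card = ∑ i : Fin α, (F.filter (fun x => CatAux.idx x = i)).card :=
      Finset.card_eq_sum_card_fiberwise (fun x _ => Finset.mem_univ _)
    set B : Finset (Fin α) := Finset.univ.filter P with hBdef
    have hBle : B.card ≤ 1 := by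
      refine Finset.card_le_one.mpr ?_
      intro i hi j hj
      rw [hBdef, Finset.mem_filter] at hi hj
      exact hB i j hi.2 hj.2
    have hfib : ∀ i : Fin α,
        (if P i then 1 else 2) ≤ (F.filter (fun x => CatAux.idx x = i)).card := by
      intro i
      by_cases hPi : P i
      · rw [if_pos hPi]
        rcases hA i with h | h
        · exact Finset.card_pos.mpr ⟨CatV.leaf i, by
            rw [Finset.mem_filter]; exact ⟨(hmemF _).mpr h, rfl⟩⟩
        · exact Finset.card_pos.mpr ⟨CatV.leaf' i, by
            rw [Finset.mem_filter]; exact ⟨(hmemF _).mpr h, rfl⟩⟩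
      · rw [if_neg hPi]
        simp only [hP] at hPi
        push_neg at hPi
        refine Finset.one_lt_card.mpr ?_
        by_cases hv : CatV.v i ∈ S
        · rcases hA i with h | h
          · exact ⟨CatV.v i, by rw [Finset.mem_filter]; exact ⟨(hmemF _).mpr hv, rfl⟩,
              CatV.leaf i, by rw [Finset.mem_filter]; exact ⟨(hmemF _).mpr h, rfl⟩, by simp⟩
          · exact ⟨CatV.v i, by rw [Finset.mem_filter]; exact ⟨(hmemF _).mpr hv, rfl⟩,
              CatV.leaf' i, by rw [Finset.mem_filter]; exact ⟨(hmemF _).mpr h, rfl⟩, by simp⟩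
        · obtain ⟨h1, h2⟩ := hPi hv
          exact ⟨CatV.leaf i, by rw [Finset.mem_filter]; exact ⟨(hmemF _).mpr h1, rfl⟩,
            CatV.leaf' i, by rw [Finset.mem_filter]; exact ⟨(hmemF _).mpr h2, rfl⟩, by simp⟩
    have hge : ∑ i : Fin α, (if P i then 1 else 2) ≤ F.card := by
      rw [hsum]
      exact Finset.sum_le_sum (fun i _ => hfib i)
    have hsplit : B.card + (Finset.univ.filter (fun i => ¬ P i)).card = α := by
      rw [hBdef, Finset.card_filter_add_card_filter_not]
      simp
    have hval : ∑ i : Fin α, (if P i then 1 else 2)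
        = B.card * 1 + (Finset.univ.filter (fun i => ¬ P i)).card * 2 := by
      rw [Finset.sum_ite, Finset.sum_const, Finset.sum_const, smul_eq_mul, smul_eq_mul, hBdef]
    rw [hcard]
    omega
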